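/- Let p, q be relatively prime positive integers and T an order ideal in ℕ² contained in the region p·x + q·y < (p-1)(q-1). Let λ and μ be the associated partition and its dual (λ_j = 1 + max{i : (i,j) ∈ T} or 0; μ_i = 1 + max{j : (i,j) ∈ T} or 0). Define A_T(t) = Σ_{a=0}^{p-1} t^{a·q - p·λ_{p-1-a}} and B_T(t) = Σ_{a=0}^{q-1} t^{a·p - q·μ_{q-1-a}}. Then A_T(t)·ξ_q(t) = B_T(t)·ξ_p(t), where ξ_d(t) = 1 + t + ... + t^{d-1}. -/
import Mathlib


open Polynomial

noncomputable def xi (d : ℕ) : Polynomial ℤ := ∑ k ∈ Finset.range d, X ^ k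

def IsOrderIdeal (T : Finset (ℕ × ℕ)) : Prop :=
  ∀ a ∈ T, ∀ b : ℕ × ℕ, b.1 ≤ a.1 → b.2 ≤ a.2 → b ∈ T

/-- λ_j = 1 + max{i : (i,j) ∈ T}, or 0 if no such i. -/
def lamb (T : Finset (ℕ × ℕ)) (j : ℕ) : ℕ :=
  (T.filter fun z => z.2 = j).sup fun z => z.1 + 1

/-- μ_i = 1 + max{j : (i,j) ∈ T}, or 0 if no such j (the dual partition). -/
def mub (T : Finset (ℕ × ℕ)) (i : ℕ) : ℕ :=
  (T.filter fun z => z.1 = i).sup fun z => z.2 + 1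

/-- A_T(t) = Σ_{a=0}^{p-1} t^{aq - p λ_{p-1-a}} -/
noncomputable def AT (p q : ℕ) (T : Finset (ℕ × ℕ)) : Polynomial ℤ :=
  ∑ a ∈ Finset.range p, X ^ (a * q - p * lamb T (p - 1 - a))

/-- B_T(t) = Σ_{a=0}^{q-1} t^{ap - q μ_{q-1-a}} -/
noncomputable def BT (p q : ℕ) (T : Finset (ℕ × ℕ)) : Polynomial ℤ :=
  ∑ a ∈ Finset.range q, X ^ (a * p - q * mub T (q - 1 - a))

/- ### Auxiliary lemmas -/

lemma lamb_eq_of_mem (T : Finset (ℕ × ℕ)) (hT : IsOrderIdeal T) (x y : ℕ)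
    (hxy : (x, y) ∈ T) (hx1 : (x + 1, y) ∉ T) : lamb T y = x + 1 := by
  apply le_antisymm
  · apply Finset.sup_le
    intro z hz
    simp only [Finset.mem_filter] at hz
    by_contra h
    push_neg at h
    exact hx1 (hT z hz.1 (x + 1, y) (by omega) (le_of_eq hz.2.symm))
  · have hm : (x, y) ∈ T.filter (fun z : ℕ × ℕ => z.2 = y) :=
      Finset.mem_filter.2 ⟨hxy, rfl⟩
    exact Finset.le_sup (f := fun z : ℕ × ℕ => z.1 + 1) hm

lemma lamb_erase_eq (T : Finset (ℕ × ℕ)) (hT : IsOrderIdeal T) (x y : ℕ)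
    (hxy : (x, y) ∈ T) (hx1 : (x + 1, y) ∉ T) :
    lamb (T.erase (x, y)) y = x := by
  apply le_antisymm
  · apply Finset.sup_le
    intro z hz
    simp only [Finset.mem_filter, Finset.mem_erase] at hz
    obtain ⟨⟨hne, hzT⟩, hz2⟩ := hz
    have hzx : z.1 ≤ x := by
      by_contra h
      push_neg at h
      exact hx1 (hT z hzT (x + 1, y) h (le_of_eq hz2.symm))
    have hzne : z.1 ≠ x := by
      intro he
      exact hne (Prod.ext he hz2)
    omega
  · cases x with
    | zero => exact Nat.zero_le _
    | succ x' =>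
      have hmem : (x', y) ∈ T.erase (x' + 1, y) := by
        refine Finset.mem_erase.2 ⟨by simp, ?_⟩
        exact hT (x' + 1, y) hxy (x', y) (by omega) le_rfl
      have hm : (x', y) ∈ (T.erase (x' + 1, y)).filter (fun z : ℕ × ℕ => z.2 = y) :=
        Finset.mem_filter.2 ⟨hmem, rfl⟩
      exact Finset.le_sup (f := fun z : ℕ × ℕ => z.1 + 1) hm

lemma lamb_erase_ne (T : Finset (ℕ × ℕ)) (x y j : ℕ) (hj : j ≠ y) :
    lamb (T.erase (x, y)) j = lamb T j := by
  unfold lamb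
  congr 1
  ext z
  simp only [Finset.mem_filter, Finset.mem_erase]
  constructor
  · rintro ⟨⟨_, h⟩, h2⟩; exact ⟨h, h2⟩
  · rintro ⟨h, h2⟩
    refine ⟨⟨?_, h⟩, h2⟩
    rintro rfl
    exact hj h2.symm

lemma arith1 (p q x y : ℕ) (h : p * x + q * y + p + q ≤ p * q) (hy : y + 2 ≤ p) :
    (p - 1 - y) * q - p * x = (p * q - p - q - p * x - q * y) + p ∧
    (p - 1 - y) * q - p * (x + 1) = p * q - p - q - p * x - q * y := by
  have hq : (p - 1 - y) * q = p * q - q - q * y := by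
    rw [Nat.sub_mul, Nat.sub_mul, one_mul, Nat.mul_comm y q]
  have hp : p * (x + 1) = p * x + p := by ring
  rw [hq, hp]
  generalize p * q = A at h ⊢
  generalize p * x = B at h ⊢
  generalize q * y = C at h ⊢
  omega

lemma AT_erase (p q x y : ℕ) (T : Finset (ℕ × ℕ)) (hT : IsOrderIdeal T)
    (hxy : (x, y) ∈ T) (hx1 : (x + 1, y) ∉ T)
    (hy : y + 2 ≤ p) (h : p * x + q * y + p + q ≤ p * q) :
    AT p q (T.erase (x, y)) =
      AT p q T - X ^ (p * q - p - q - p * x - q * y)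
        + X ^ (p * q - p - q - p * x - q * y + p) := by
  have ha0 : p - 1 - y ∈ Finset.range p := by
    simp only [Finset.mem_range]; omega
  have hyy : p - 1 - (p - 1 - y) = y := by omega
  rw [AT, AT, ← Finset.add_sum_erase _ _ ha0, ← Finset.add_sum_erase _ _ ha0]
  have hsum : ∀ a ∈ (Finset.range p).erase (p - 1 - y),
      (X : Polynomial ℤ) ^ (a * q - p * lamb (T.erase (x, y)) (p - 1 - a)) =
        X ^ (a * q - p * lamb T (p - 1 - a)) := by
    intro a ha
    simp only [Finset.mem_erase, Finset.mem_range] at ha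
    rw [lamb_erase_ne]
    omega
  rw [Finset.sum_congr rfl hsum, hyy, lamb_erase_eq T hT x y hxy hx1,
    lamb_eq_of_mem T hT x y hxy hx1]
  obtain ⟨h1, h2⟩ := arith1 p q x y h hy
  rw [h1, h2]
  ring

lemma swap_mem_image (T : Finset (ℕ × ℕ)) (a b : ℕ) :
    (a, b) ∈ T.image Prod.swap ↔ (b, a) ∈ T := by
  constructor
  · intro h
    obtain ⟨w, hw, hsw⟩ := Finset.mem_image.1 h
    have : w = (b, a) := by
      have := congrArg Prod.swap hsw
      simpa using this
    rwa [this] at hw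
  · intro h
    exact Finset.mem_image.2 ⟨(b, a), h, rfl⟩

lemma isOrderIdeal_swap (T : Finset (ℕ × ℕ)) (hT : IsOrderIdeal T) :
    IsOrderIdeal (T.image Prod.swap) := by
  intro a ha b hb1 hb2
  obtain ⟨a', ha', rfl⟩ := Finset.mem_image.1 ha
  refine Finset.mem_image.2 ⟨(b.2, b.1), ?_, rfl⟩
  exact hT a' ha' (b.2, b.1) (by simpa using hb2) (by simpa using hb1)

lemma mub_swap (T : Finset (ℕ × ℕ)) (i : ℕ) :
    lamb (T.image Prod.swap) i = mub T i := by
  unfold lamb mub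
  rw [Finset.filter_image, Finset.sup_image]
  rfl

lemma BT_eq_AT_swap (p q : ℕ) (T : Finset (ℕ × ℕ)) :
    BT p q T = AT q p (T.image Prod.swap) := by
  unfold BT AT
  refine Finset.sum_congr rfl fun a _ => ?_
  rw [mub_swap]

/-- The key identity, proved by induction on the size of `T`. -/
lemma key (p q : ℕ) : ∀ n (T : Finset (ℕ × ℕ)), T.card = n → IsOrderIdeal T →
    (∀ z ∈ T, p * z.1 + q * z.2 + p + q ≤ p * q) →
    AT p q T * (X ^ q - 1) = AT q p (T.image Prod.swap) * (X ^ p - 1) := by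
  intro n
  induction n with
  | zero =>
    intro T hcard hT hreg
    have hTe : T = ∅ := Finset.card_eq_zero.mp hcard
    subst hTe
    have hA : ∀ r s : ℕ, AT r s (∅ : Finset (ℕ × ℕ)) = ∑ a ∈ Finset.range r, ((X : Polynomial ℤ) ^ s) ^ a := by
      intro r s
      unfold AT
      refine Finset.sum_congr rfl fun a _ => ?_
      simp [lamb, Nat.mul_comm a s, pow_mul]
    rw [Finset.image_empty, hA, hA, geom_sum_mul, geom_sum_mul, ← pow_mul, ← pow_mul,
      Nat.mul_comm]
  | succ n ih =>
    intro T hcard hT hreg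
    have hne : T.Nonempty := by
      rw [← Finset.card_pos, hcard]; omega
    obtain ⟨z, hz, hmax⟩ := T.exists_max_image (fun w => w.1 + w.2) hne
    obtain ⟨x, y⟩ := z
    have hx1 : (x + 1, y) ∉ T := by
      intro h
      have := hmax _ h
      simp at this
    have hy1 : (x, y + 1) ∉ T := by
      intro h
      have := hmax _ h
      simp at this
    have hzreg := hreg (x, y) hz
    simp only at hzreg
    rcases Nat.eq_zero_or_pos p with hp | hp
    · subst hp; simp [AT]
    rcases Nat.eq_zero_or_pos q with hq | hq
    · subst hq; simp [AT]
    have hy2 : y + 2 ≤ p := by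
      have h1 : q * (y + 1) < q * p := by
        have e1 : q * (y + 1) = q * y + q := by ring
        have e2 : q * p = p * q := Nat.mul_comm q p
        have e3 : (0 : ℕ) ≤ p * x := Nat.zero_le _
        linarith
      have := Nat.lt_of_mul_lt_mul_left h1
      omega
    have hx2 : x + 2 ≤ q := by
      have h1 : p * (x + 1) < p * q := by
        have e1 : p * (x + 1) = p * x + p := by ring
        have e3 : (0 : ℕ) ≤ q * y := Nat.zero_le _
        linarith
      have := Nat.lt_of_mul_lt_mul_left h1
      omega
    set T' := T.erase (x, y) with hT'def
    have hT' : IsOrderIdeal T' := by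
      intro a ha b hb1 hb2
      have haT := Finset.mem_of_mem_erase ha
      have hbT : b ∈ T := hT a haT b hb1 hb2
      refine Finset.mem_erase.2 ⟨?_, hbT⟩
      rintro rfl
      have hane : a ≠ (x, y) := (Finset.mem_erase.1 ha).1
      rcases Nat.lt_or_ge x a.1 with h | h
      · exact hx1 (hT a haT (x + 1, y) h hb2)
      · have ha1 : a.1 = x := le_antisymm h hb1
        have ha2 : y < a.2 := by
          rcases Nat.lt_or_ge y a.2 with h2 | h2
          · exact h2
          · exact absurd (Prod.ext ha1 (le_antisymm h2 hb2)) hane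
        exact hy1 (hT a haT (x, y + 1) (le_of_eq ha1.symm) ha2)
    have hcard' : T'.card = n := by
      rw [hT'def, Finset.card_erase_of_mem hz, hcard]
      omega
    have hreg' : ∀ w ∈ T', p * w.1 + q * w.2 + p + q ≤ p * q :=
      fun w hw => hreg w (Finset.mem_of_mem_erase hw)
    have hih := ih T' hcard' hT' hreg'
    -- swap facts
    set S := T.image Prod.swap with hSdef
    have hS : IsOrderIdeal S := isOrderIdeal_swap T hT
    have hzS : (y, x) ∈ S := (swap_mem_image T y x).2 hz
    have hy1S : (y + 1, x) ∉ S := fun h => hy1 ((swap_mem_image T (y + 1) x).1 h)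
    have hSreg : q * y + p * x + q + p ≤ q * p := by
      rw [Nat.mul_comm q p]
      linarith
    have hS' : T'.image Prod.swap = S.erase (y, x) := by
      rw [hT'def, hSdef, Finset.image_erase Prod.swap_injective]
      rfl
    -- erasure relations
    have hA := AT_erase p q x y T hT hz hx1 hy2 hzreg
    have hB := AT_erase q p y x S hS hzS hy1S hx2 hSreg
    have he : q * p - q - p - q * y - p * x = p * q - p - q - p * x - q * y := by
      rw [Nat.mul_comm q p]
      generalize p * q = A
      generalize p * x = B
      generalize q * y = C
      omega
    rw [he] at hB
    set e := p * q - p - q - p * x - q * y with hedef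
    have hA' : AT p q T = AT p q T' + X ^ e - X ^ (e + p) := by
      rw [hA]; ring
    have hB' : AT q p S = AT q p (S.erase (y, x)) + X ^ e - X ^ (e + q) := by
      rw [hB]; ring
    rw [hS'] at hih
    calc AT p q T * (X ^ q - 1)
        = AT p q T' * (X ^ q - 1) + (X ^ e - X ^ (e + p)) * (X ^ q - 1) := by
          rw [hA']; ring
      _ = AT q p (S.erase (y, x)) * (X ^ p - 1)
            + (X ^ e - X ^ (e + q)) * (X ^ p - 1) := by
          rw [hih, pow_add, pow_add]; ring
      _ = AT q p S * (X ^ p - 1) := by rw [hB']; ring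

/-- Proposition: A_T(t)·ξ_q(t) = B_T(t)·ξ_p(t). -/
theorem stmt2 (p q : ℕ) (hp : 0 < p) (hq : 0 < q) (hpq : Nat.Coprime p q)
    (T : Finset (ℕ × ℕ)) (hT : IsOrderIdeal T)
    (hreg : ∀ z ∈ T, p * z.1 + q * z.2 < (p - 1) * (q - 1)) :
    AT p q T * xi q = BT p q T * xi p := by
  have hconv : ∀ z ∈ T, p * z.1 + q * z.2 + p + q ≤ p * q := by
    intro z hz
    have h := hreg z hz
    have h1 : (p - 1) * (q - 1) = p * q - p - (q - 1) := by
      rw [Nat.sub_one_mul, Nat.mul_sub_one]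
    rw [h1] at h
    revert h
    generalize p * q = A
    generalize p * z.1 = B
    generalize q * z.2 = C
    intro h
    omega
  have hkey := key p q T.card T rfl hT hconv
  have hne : (X - 1 : Polynomial ℤ) ≠ 0 := by
    simpa using Polynomial.X_sub_C_ne_zero (1 : ℤ)
  apply mul_right_cancel₀ hne
  have hxq : xi q * (X - 1) = (X : Polynomial ℤ) ^ q - 1 := by
    unfold xi; exact geom_sum_mul X q
  have hxp : xi p * (X - 1) = (X : Polynomial ℤ) ^ p - 1 := by
    unfold xi; exact geom_sum_mul X p
  calc AT p q T * xi q * (X - 1)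
      = AT p q T * ((X : Polynomial ℤ) ^ q - 1) := by rw [mul_assoc, hxq]
    _ = AT q p (T.image Prod.swap) * ((X : Polynomial ℤ) ^ p - 1) := hkey
    _ = BT p q T * xi p * (X - 1) := by rw [← BT_eq_AT_swap, mul_assoc, hxp]
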